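/- For a finite group G with subgroups H₁ and H₂, every conjugacy class of G intersects H₁ and H₂ in the same number of elements if and only if for every finite-dimensional complex representation V of G, the dimensions of the invariant subspaces V^{H₁} and V^{H₂} are equal. -/

import Mathlib

noncomputable section
namespace Gassmann
open Finset LinearMap Module

attribute [local instance] Classical.propDecidable

section avg
variable {K : Type*} [Group K] [Fintype K] {V : Type*} [AddCommGroup V] [Module ℂ V]

/-- The averaging operator of a representation of a finite group. -/
def avg (ρ : Representation ℂ K V) : Module.End ℂ V :=
  (Fintype.card K : ℂ)⁻¹ • ∑ x : K, ρ x

lemma avg_isProj (ρ : Representation ℂ K V) : IsProj ρ.invariants (avg ρ) := by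
  constructor
  · intro v
    rw [Representation.mem_invariants]
    intro k
    simp only [avg, map_smul, LinearMap.smul_apply, LinearMap.sum_apply, map_sum]
    congr 1
    refine Fintype.sum_equiv (Equiv.mulLeft k) _ _ fun x => ?_
    simp only [Equiv.coe_mulLeft, ← Module.End.mul_apply, ← map_mul]
  · intro v hv
    rw [Representation.mem_invariants] at hv
    simp only [avg, LinearMap.smul_apply, LinearMap.sum_apply, hv]
    rw [Finset.sum_const, card_univ, ← Nat.cast_smul_eq_nsmul ℂ, smul_smul,
      inv_mul_cancel₀ (Nat.cast_ne_zero.2 Fintype.card_ne_zero), one_smul]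

lemma avg_range (ρ : Representation ℂ K V) : range (avg ρ) = ρ.invariants := by
  apply le_antisymm
  · rintro _ ⟨v, rfl⟩; exact (avg_isProj ρ).map_mem v
  · intro v hv; exact ⟨v, (avg_isProj ρ).map_id v hv⟩

lemma avg_idem (ρ : Representation ℂ K V) : IsIdempotentElem (avg ρ) := by
  unfold IsIdempotentElem
  ext v
  exact (avg_isProj ρ).map_id _ ((avg_isProj ρ).map_mem v)

lemma finrank_invariants_eq (ρ : Representation ℂ K V) [FiniteDimensional ℂ V] :
    (finrank ℂ ρ.invariants : ℂ)
      = (Fintype.card K : ℂ)⁻¹ * ∑ x : K, trace ℂ V (ρ x) := by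
  rw [← (avg_isProj ρ).trace, avg, map_smul, map_sum, smul_eq_mul]

end avg

section fwd
variable {G : Type} [Group G] [Fintype G]

/-- Number of elements of `H` conjugate to `g`. -/
def cnt (H : Subgroup G) (g : G) : ℕ := (univ.filter fun h => h ∈ H ∧ IsConj g h).card

lemma natCard_eq_cnt (H : Subgroup G) (g : G) :
    Nat.card {h : G // h ∈ H ∧ IsConj g h} = cnt H g := by
  rw [Nat.card_eq_fintype_card, cnt, Fintype.card_subtype]

/-- class size -/
def cl (g : G) : ℕ := (univ.filter fun x => IsConj g x).card

lemma cl_pos (g : G) : 0 < cl g :=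
  Finset.card_pos.2 ⟨g, by simp only [mem_filter, mem_univ, true_and]; exact IsConj.refl g⟩

lemma cl_conj {g h : G} (hgh : IsConj g h) : cl g = cl h := by
  unfold cl
  congr 1
  ext x
  simp only [mem_filter, mem_univ, true_and]
  exact ⟨fun hx => (hgh.symm).trans hx, fun hx => hgh.trans hx⟩

lemma sum_subgroup_eq_sum_classes (H : Subgroup G) (χ : G → ℂ)
    (hχ : ∀ a b : G, IsConj a b → χ a = χ b) :
    ∑ h : ↥H, χ h = ∑ g : G, (cnt H g : ℂ) * (χ g / (cl g : ℂ)) := by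
  have key : ∀ g : G, (cnt H g : ℂ) * (χ g / (cl g : ℂ))
      = ∑ h : G, if h ∈ H ∧ IsConj g h then χ g / (cl g : ℂ) else 0 := by
    intro g
    rw [cnt, Finset.card_filter, Nat.cast_sum]
    rw [Finset.sum_mul]
    refine Finset.sum_congr rfl fun h _ => ?_
    split_ifs <;> simp
  have inner : ∀ h : G, (∑ g : G, if h ∈ H ∧ IsConj g h then χ g / (cl g : ℂ) else 0)
      = if h ∈ H then χ h else 0 := by
    intro h
    by_cases hH : h ∈ H
    · simp only [hH, true_and, if_true]
      have : ∀ g : G, (if IsConj g h then χ g / (cl g : ℂ) else 0)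
          = if IsConj g h then χ h / (cl h : ℂ) else 0 := by
        intro g
        split_ifs with hc
        · rw [hχ g h hc, cl_conj hc]
        · rfl
      rw [Finset.sum_congr rfl fun g _ => this g]
      rw [← Finset.sum_filter, Finset.sum_const]
      have hcard : (univ.filter fun g => IsConj g h).card = cl h := by
        unfold cl; congr 1; ext x
        simp only [mem_filter, mem_univ, true_and]
        exact isConj_comm
      rw [hcard, nsmul_eq_mul, mul_comm,
        div_mul_cancel₀ _ (Nat.cast_ne_zero.2 (cl_pos h).ne' : (cl h : ℂ) ≠ 0)]
    · simp [hH]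
  calc ∑ h : ↥H, χ h
      = ∑ h ∈ univ.filter (fun x => x ∈ H), χ h :=
        (Finset.sum_subtype (univ.filter fun x => x ∈ H) (by simp) χ).symm
    _ = ∑ h : G, if h ∈ H then χ h else 0 := Finset.sum_filter _ _
    _ = ∑ h : G, ∑ g : G, if h ∈ H ∧ IsConj g h then χ g / (cl g : ℂ) else 0 :=
        (Finset.sum_congr rfl fun h _ => (inner h).symm)
    _ = ∑ g : G, ∑ h : G, if h ∈ H ∧ IsConj g h then χ g / (cl g : ℂ) else 0 :=
        Finset.sum_comm
    _ = ∑ g : G, (cnt H g : ℂ) * (χ g / (cl g : ℂ)) :=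
        Finset.sum_congr rfl fun g _ => (key g).symm

omit [Fintype G] in
lemma trace_conj_invariant {V : Type} [AddCommGroup V] [Module ℂ V] [FiniteDimensional ℂ V]
    (ρ : Representation ℂ G V) {a b : G} (h : IsConj a b) :
    trace ℂ V (ρ a) = trace ℂ V (ρ b) := by
  rw [isConj_iff] at h
  obtain ⟨c, hcc⟩ := h
  rw [← hcc]
  have e : ρ (c * a * c⁻¹) = (ρ c * ρ a) * ρ c⁻¹ := by rw [map_mul, map_mul]
  rw [e, trace_mul_comm, ← mul_assoc, ← map_mul]
  simp

lemma forward (H₁ H₂ : Subgroup G) (hc : ∀ g : G, cnt H₁ g = cnt H₂ g)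
    (V : Type) [AddCommGroup V] [Module ℂ V] [FiniteDimensional ℂ V]
    (ρ : Representation ℂ G V) :
    finrank ℂ (Representation.invariants (ρ.comp H₁.subtype : Representation ℂ ↥H₁ V))
      = finrank ℂ (Representation.invariants (ρ.comp H₂.subtype : Representation ℂ ↥H₂ V)) := by
  have hsum : ∀ χ : G → ℂ, (∀ a b : G, IsConj a b → χ a = χ b) →
      ∑ h : ↥H₁, χ h = ∑ h : ↥H₂, χ h := by
    intro χ hχ
    rw [sum_subgroup_eq_sum_classes H₁ χ hχ, sum_subgroup_eq_sum_classes H₂ χ hχ]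
    exact Finset.sum_congr rfl fun g _ => by rw [hc g]
  have hcard : (Fintype.card ↥H₁ : ℂ) = (Fintype.card ↥H₂ : ℂ) := by
    have := hsum (fun _ => 1) (fun _ _ _ => rfl)
    simpa [Finset.card_univ] using this
  have hχ : ∀ a b : G, IsConj a b → trace ℂ V (ρ a) = trace ℂ V (ρ b) :=
    fun a b h => trace_conj_invariant ρ h
  have key := hsum (fun x => trace ℂ V (ρ x)) hχ
  have h1 := finrank_invariants_eq (ρ.comp H₁.subtype : Representation ℂ ↥H₁ V)
  have h2 := finrank_invariants_eq (ρ.comp H₂.subtype : Representation ℂ ↥H₂ V)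
  have hfin : (finrank ℂ (Representation.invariants
        (ρ.comp H₁.subtype : Representation ℂ ↥H₁ V)) : ℂ)
      = (finrank ℂ (Representation.invariants
        (ρ.comp H₂.subtype : Representation ℂ ↥H₂ V)) : ℂ) := by
    rw [h1, h2, hcard]
    congr 1
  exact_mod_cast hfin

end fwd

section bwd
variable {G : Type} [Group G] [Fintype G]

/-- The right regular representation on `G → ℂ`. -/
def rreg : Representation ℂ G (G → ℂ) where
  toFun y := LinearMap.funLeft ℂ ℂ (fun x => x * y)
  map_one' := by
    refine LinearMap.ext fun f => funext fun x => ?_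
    simp [LinearMap.funLeft_apply]
  map_mul' y z := by
    refine LinearMap.ext fun f => funext fun x => ?_
    simp only [LinearMap.funLeft_apply, Module.End.mul_apply, mul_assoc]

@[simp] lemma rreg_apply (y : G) (f : G → ℂ) (x : G) : rreg y f x = f (x * y) := rfl

lemma trace_funLeft (σ : G → G) :
    trace ℂ (G → ℂ) (funLeft ℂ ℂ σ) = ((univ.filter fun x => σ x = x).card : ℂ) := by
  classical
  rw [trace_eq_matrix_trace ℂ (Pi.basisFun ℂ G), Matrix.trace]
  have : ∀ i : G, (LinearMap.toMatrix (Pi.basisFun ℂ G) (Pi.basisFun ℂ G)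
      (funLeft ℂ ℂ σ)).diag i = if σ i = i then (1 : ℂ) else 0 := by
    intro i
    rw [Matrix.diag_apply, LinearMap.toMatrix_apply, Pi.basisFun_repr,
      funLeft_apply, Pi.basisFun_apply]
    simp [Pi.single_apply]
  rw [Finset.sum_congr rfl fun i _ => this i, Finset.sum_boole]

/-- Left translation by `g` as an endomorphism of `G → ℂ`. -/
def lmul (g : G) : Module.End ℂ (G → ℂ) := funLeft ℂ ℂ (fun x => g * x)

lemma lmul_pow (g : G) (a : ℕ) : (lmul g) ^ a = funLeft ℂ ℂ (fun x => g ^ a * x) := by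
  induction a with
  | zero =>
      refine LinearMap.ext fun f => funext fun x => ?_
      simp [funLeft_apply]
  | succ a ih =>
      rw [pow_succ, ih]
      refine LinearMap.ext fun f => funext fun x => ?_
      simp only [Module.End.mul_apply, funLeft_apply, lmul]
      rw [← mul_assoc, ← pow_succ']

lemma lmul_pow_mul_rreg (g : G) (a : ℕ) (y : G) :
    (lmul g) ^ a * rreg y = funLeft ℂ ℂ (fun x => g ^ a * x * y) := by
  rw [lmul_pow]
  refine LinearMap.ext fun f => funext fun x => ?_
  simp only [Module.End.mul_apply, funLeft_apply, rreg_apply, mul_assoc]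

lemma rreg_comm_lmul (g y : G) : Commute ((lmul g)) (rreg y) := by
  unfold Commute SemiconjBy
  refine LinearMap.ext fun f => funext fun x => ?_
  simp only [lmul, Module.End.mul_apply, funLeft_apply, rreg_apply, mul_assoc]

/-- A primitive `|G|`-th root of unity. -/
def zeta (G : Type) [Fintype G] : ℂ :=
  Complex.exp (2 * Real.pi * Complex.I / Fintype.card G)

lemma zeta_prim (G : Type) [Fintype G] [Nonempty G] :
    IsPrimitiveRoot (zeta G) (Fintype.card G) :=
  Complex.isPrimitiveRoot_exp _ Fintype.card_ne_zero

variable [Nonempty G]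

/-- Projection onto the `zeta G ^ (-q)`-eigenspace of left translation by `g`. -/
def P (g : G) (q : ℕ) : Module.End ℂ (G → ℂ) :=
  (Fintype.card G : ℂ)⁻¹ •
    ∑ a ∈ range (Fintype.card G), zeta G ^ (q * a) • (lmul g) ^ a

lemma F_period (g : G) (q : ℕ) :
    zeta G ^ (q * Fintype.card G) • (lmul g) ^ (Fintype.card G)
      = zeta G ^ (q * 0) • (lmul g) ^ (0 : ℕ) := by
  rw [mul_comm q, pow_mul, (zeta_prim G).pow_eq_one, one_pow, lmul_pow, pow_card_eq_one]
  simp only [mul_zero, pow_zero, one_smul]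
  refine LinearMap.ext fun f => funext fun x => ?_
  simp [funLeft_apply]

lemma P_mul_lmul (g : G) (q : ℕ) : zeta G ^ q • (P g q * lmul g) = P g q := by
  set n := Fintype.card G
  set F : ℕ → Module.End ℂ (G → ℂ) := fun b => zeta G ^ (q * b) • (lmul g) ^ b with hF
  have hreindex : ∑ a ∈ range n, F (a + 1) = ∑ a ∈ range n, F a := by
    have h1 := Finset.sum_range_succ F n
    have h2 := Finset.sum_range_succ' F n
    have hFn : F n = F 0 := F_period g q
    rw [h1, hFn] at h2
    exact (add_right_cancel h2.symm)
  unfold P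
  rw [smul_mul_assoc, Finset.sum_mul, smul_comm]
  congr 1
  calc zeta G ^ q • ∑ a ∈ range n, (zeta G ^ (q * a) • (lmul g) ^ a) * lmul g
      = ∑ a ∈ range n, F (a + 1) := by
        rw [Finset.smul_sum]
        refine Finset.sum_congr rfl fun a _ => ?_
        rw [smul_mul_assoc, smul_smul, ← pow_succ, hF]
        simp only
        congr 1
        rw [← pow_add]
        congr 1
        ring
    _ = ∑ a ∈ range n, F a := hreindex

lemma P_mul_lmul_pow (g : G) (q a : ℕ) :
    zeta G ^ (q * a) • (P g q * (lmul g) ^ a) = P g q := by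
  induction a with
  | zero => simp
  | succ a ih =>
      rw [pow_succ, ← mul_assoc, mul_add, mul_one, pow_add, mul_smul, smul_comm,
        ← smul_mul_assoc, ih]
      exact P_mul_lmul g q

lemma P_idem (g : G) (q : ℕ) : IsIdempotentElem (P g q) := by
  unfold IsIdempotentElem
  conv_lhs => rw [show P g q * P g q = P g q *
    ((Fintype.card G : ℂ)⁻¹ • ∑ a ∈ range (Fintype.card G), zeta G ^ (q * a) • (lmul g) ^ a) from rfl]
  rw [mul_smul_comm, Finset.mul_sum]
  rw [Finset.sum_congr rfl fun a _ => (mul_smul_comm _ _ _ : P g q * (zeta G ^ (q*a) • (lmul g)^a) = zeta G ^ (q*a) • (P g q * (lmul g)^a))]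
  rw [Finset.sum_congr rfl fun a _ => P_mul_lmul_pow g q a]
  rw [Finset.sum_const, Finset.card_range, ← Nat.cast_smul_eq_nsmul ℂ, smul_smul]
  rw [inv_mul_cancel₀ (Nat.cast_ne_zero.2 Fintype.card_ne_zero), one_smul]

lemma P_comm_rreg (g : G) (q : ℕ) (y : G) : Commute (P g q) (rreg y) := by
  unfold P
  refine Commute.smul_left ?_ _
  refine Commute.sum_left _ _ _ fun a _ => ?_
  refine Commute.smul_left ?_ _
  exact ((rreg_comm_lmul g y).pow_left a)

end bwd

section endlemmas
variable {V : Type*} [AddCommGroup V] [Module ℂ V]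

lemma idem_mem_range_iff {Q : Module.End ℂ V} (hQ : IsIdempotentElem Q) {v : V} :
    v ∈ range Q ↔ Q v = v := by
  constructor
  · rintro ⟨w, rfl⟩
    exact congrFun (congrArg (fun (T : Module.End ℂ V) => ⇑T) hQ) w
  · intro h
    exact ⟨v, h⟩

lemma idem_isProj {Q : Module.End ℂ V} (hQ : IsIdempotentElem Q) :
    IsProj (range Q) Q :=
  ⟨fun v => LinearMap.mem_range_self Q v, fun _ hv => (idem_mem_range_iff hQ).1 hv⟩

lemma idem_mul_idem {P' Q : Module.End ℂ V} (hP : IsIdempotentElem P')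
    (hQ : IsIdempotentElem Q) (hc : Commute P' Q) : IsIdempotentElem (P' * Q) := by
  unfold IsIdempotentElem
  calc P' * Q * (P' * Q) = P' * (Q * P') * Q := by noncomm_ring
    _ = P' * (P' * Q) * Q := by rw [hc.eq]
    _ = (P' * P') * (Q * Q) := by noncomm_ring
    _ = P' * Q := by rw [hP.eq, hQ.eq]

lemma range_mul_of_commute {P' Q : Module.End ℂ V} (hP : IsIdempotentElem P')
    (hQ : IsIdempotentElem Q) (hc : Commute P' Q) :
    range (P' * Q) = range P' ⊓ range Q := by
  apply le_antisymm
  · rintro _ ⟨v, rfl⟩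
    refine ⟨⟨Q v, rfl⟩, ?_⟩
    rw [Module.End.mul_apply, ← Module.End.mul_apply, hc.eq, Module.End.mul_apply]
    exact ⟨P' v, rfl⟩
  · rintro v ⟨hvP, hvQ⟩
    rw [SetLike.mem_coe, idem_mem_range_iff hP] at hvP
    rw [SetLike.mem_coe, idem_mem_range_iff hQ] at hvQ
    refine ⟨v, ?_⟩
    rw [Module.End.mul_apply, hvQ, hvP]

lemma finrank_range_idem [FiniteDimensional ℂ V] {Q : Module.End ℂ V}
    (hQ : IsIdempotentElem Q) :
    (finrank ℂ (range Q) : ℂ) = trace ℂ V Q :=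
  ((idem_isProj hQ).trace).symm

end endlemmas

section subrep2
variable {G : Type} [Group G] {V : Type*} [AddCommGroup V] [Module ℂ V]

/-- Restriction of a representation to an invariant submodule. -/
def subRep (ρ : Representation ℂ G V) (W : Submodule ℂ V)
    (hW : ∀ y : G, ∀ v ∈ W, ρ y v ∈ W) : Representation ℂ G ↥W where
  toFun y := (ρ y).restrict (hW y)
  map_one' := LinearMap.ext fun v => Subtype.ext (by simp [LinearMap.restrict_apply])
  map_mul' y z := LinearMap.ext fun v => Subtype.ext (by simp [LinearMap.restrict_apply])

lemma finrank_invariants_subRep (ρ : Representation ℂ G V) (W : Submodule ℂ V)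
    (hW : ∀ y : G, ∀ v ∈ W, ρ y v ∈ W) (H : Subgroup G) :
    finrank ℂ (Representation.invariants
        ((subRep ρ W hW).comp H.subtype : Representation ℂ ↥H ↥W))
      = finrank ℂ ↥(W ⊓ Representation.invariants
          (ρ.comp H.subtype : Representation ℂ ↥H V)) := by
  have hmap : Submodule.map W.subtype (Representation.invariants
      ((subRep ρ W hW).comp H.subtype : Representation ℂ ↥H ↥W))
      = W ⊓ Representation.invariants (ρ.comp H.subtype : Representation ℂ ↥H V) := by
    ext v
    rw [Submodule.mem_map, Submodule.mem_inf]
    constructor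
    · rintro ⟨⟨w, hw⟩, hinv, rfl⟩
      rw [Representation.mem_invariants] at hinv
      refine ⟨hw, ?_⟩
      rw [Representation.mem_invariants]
      intro h
      exact congrArg Subtype.val (hinv h)
    · rintro ⟨hvW, hvinv⟩
      rw [Representation.mem_invariants] at hvinv
      refine ⟨⟨v, hvW⟩, ?_, rfl⟩
      rw [Representation.mem_invariants]
      intro h
      exact Subtype.ext (hvinv h)
  rw [← hmap, Submodule.finrank_map_subtype_eq]

end subrep2

section bwd2
variable {G : Type} [Group G] [Fintype G] [Nonempty G]

/-- Averaging projection for the subgroup `H` acting via `rreg`. -/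
def PH (H : Subgroup G) : Module.End ℂ (G → ℂ) :=
  avg (rreg.comp H.subtype : Representation ℂ ↥H (G → ℂ))

lemma PH_def (H : Subgroup G) :
    PH H = (Fintype.card ↥H : ℂ)⁻¹ • ∑ h : ↥H, rreg (h : G) := rfl

lemma PH_idem (H : Subgroup G) : IsIdempotentElem (PH H) := avg_idem _

lemma PH_range (H : Subgroup G) : range (PH H)
    = Representation.invariants (rreg.comp H.subtype : Representation ℂ ↥H (G → ℂ)) :=
  avg_range _

lemma P_comm_PH (g : G) (q : ℕ) (H : Subgroup G) : Commute (P g q) (PH H) := by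
  rw [PH_def]
  refine Commute.smul_right ?_ _
  exact Commute.sum_right _ _ _ fun h _ => P_comm_rreg g q ↑h

lemma P_invariant_sub (g : G) (q : ℕ) :
    ∀ y : G, ∀ v ∈ range (P g q), rreg y v ∈ range (P g q) := by
  intro y v hv
  rw [idem_mem_range_iff (P_idem g q)] at hv ⊢
  rw [← Module.End.mul_apply, (P_comm_rreg g q y).eq, Module.End.mul_apply, hv]

/-- The subrepresentation of `rreg` on the eigenspace `range (P g q)`. -/
def Wrep (g : G) (q : ℕ) : Representation ℂ G ↥(range (P g q)) :=
  subRep rreg (range (P g q)) (P_invariant_sub g q)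

/-- rank of the composite projection -/
def rk (g : G) (q : ℕ) (H : Subgroup G) : ℕ := finrank ℂ (range (P g q * PH H))

lemma finrank_Wrep_invariants (g : G) (q : ℕ) (H : Subgroup G) :
    finrank ℂ (Representation.invariants
      ((Wrep g q).comp H.subtype : Representation ℂ ↥H ↥(range (P g q)))) = rk g q H := by
  rw [Wrep, finrank_invariants_subRep]
  have hW : range (P g q) ⊓ Representation.invariants
      (rreg.comp H.subtype : Representation ℂ ↥H (G → ℂ)) = range (P g q * PH H) := by
    rw [range_mul_of_commute (P_idem g q) (PH_idem H) (P_comm_PH g q H), PH_range]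
  rw [hW, rk]

/-- number of fixed points of `x ↦ u * x * h` -/
def Nfix (u h : G) : ℕ := (univ.filter fun x => u * x * h = x).card

lemma trace_rk (g : G) (q : ℕ) (H : Subgroup G) :
    (rk g q H : ℂ) = ((Fintype.card G : ℂ)⁻¹ * (Fintype.card ↥H : ℂ)⁻¹) *
      ∑ a ∈ range (Fintype.card G), ∑ h : ↥H, zeta G ^ (q * a) * (Nfix (g ^ a) ↑h : ℂ) := by
  rw [rk, finrank_range_idem (idem_mul_idem (P_idem g q) (PH_idem H) (P_comm_PH g q H))]
  rw [P, PH_def, smul_mul_assoc, mul_smul_comm, smul_smul, Finset.sum_mul_sum]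
  rw [map_smul, map_sum]
  rw [Finset.sum_congr rfl fun a _ => map_sum (trace ℂ (G → ℂ)) _ univ]
  rw [smul_eq_mul]
  congr 1
  refine Finset.sum_congr rfl fun a _ => Finset.sum_congr rfl fun h _ => ?_
  rw [smul_mul_assoc, map_smul, lmul_pow_mul_rreg, trace_funLeft, smul_eq_mul]
  rfl

lemma geom_lemma (m : ℕ) :
    ∑ q ∈ range (Fintype.card G), (zeta G ^ m) ^ q
      = if Fintype.card G ∣ m then (Fintype.card G : ℂ) else 0 := by
  by_cases hd : Fintype.card G ∣ m
  · rw [if_pos hd, ((zeta_prim G).pow_eq_one_iff_dvd m).2 hd]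
    simp
  · rw [if_neg hd, geom_sum_eq (fun hcontra =>
      hd (((zeta_prim G).pow_eq_one_iff_dvd m).1 hcontra))]
    rw [← pow_mul, mul_comm m, pow_mul, (zeta_prim G).pow_eq_one, one_pow, sub_self, zero_div]

lemma sum_zeta_rk (g : G) (H : Subgroup G) :
    ∑ q ∈ range (Fintype.card G), zeta G ^ q * (rk g q H : ℂ)
      = (Fintype.card ↥H : ℂ)⁻¹ *
          ∑ h : ↥H, (Nfix (g ^ (Fintype.card G - 1)) ↑h : ℂ) := by
  set n := Fintype.card G with hn
  set m := (Fintype.card ↥H : ℂ) with hm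
  set c : ℕ → ℂ := fun a => ∑ h : ↥H, (Nfix (g ^ a) ↑h : ℂ) with hc
  have hn0 : (n : ℂ) ≠ 0 := Nat.cast_ne_zero.2 Fintype.card_ne_zero
  calc ∑ q ∈ range n, zeta G ^ q * (rk g q H : ℂ)
      = ((n : ℂ)⁻¹ * m⁻¹) *
          ∑ q ∈ range n, ∑ a ∈ range n, ∑ h : ↥H, (zeta G ^ (a + 1)) ^ q * (Nfix (g ^ a) ↑h : ℂ) := by
        rw [Finset.mul_sum]
        refine Finset.sum_congr rfl fun q _ => ?_
        rw [trace_rk g q H, ← mul_assoc, mul_comm (zeta G ^ q), mul_assoc]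
        congr 1
        rw [Finset.mul_sum]
        refine Finset.sum_congr rfl fun a _ => ?_
        rw [Finset.mul_sum]
        refine Finset.sum_congr rfl fun h _ => ?_
        rw [← mul_assoc, ← pow_add, ← pow_mul]
        congr 2
        ring
    _ = ((n : ℂ)⁻¹ * m⁻¹) * ∑ a ∈ range n, (∑ q ∈ range n, (zeta G ^ (a + 1)) ^ q) * c a := by
        rw [Finset.sum_comm]
        congr 1
        refine Finset.sum_congr rfl fun a _ => ?_
        rw [Finset.sum_mul_sum]
    _ = ((n : ℂ)⁻¹ * m⁻¹) * ((n : ℂ) * c (n - 1)) := by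
        congr 1
        rw [Finset.sum_congr rfl fun a _ => by rw [geom_lemma (a + 1)]]
        rw [Finset.sum_eq_single_of_mem (n - 1)
          (Finset.mem_range.2 (Nat.sub_lt Fintype.card_pos one_pos))]
        · rw [Nat.sub_add_cancel (Nat.one_le_iff_ne_zero.2 Fintype.card_ne_zero), if_pos dvd_rfl]
        · intro b hb hbne
          rw [if_neg, zero_mul]
          intro hdvd
          have hb1 : b + 1 ≤ n := Nat.succ_le_of_lt (Finset.mem_range.1 hb)
          have hb2 := Nat.le_of_dvd (Nat.succ_pos b) hdvd
          exact hbne (by omega)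
    _ = m⁻¹ * c (n - 1) := by
        rw [show ((n : ℂ)⁻¹ * m⁻¹) * ((n : ℂ) * c (n - 1))
            = ((n : ℂ)⁻¹ * (n : ℂ)) * (m⁻¹ * c (n - 1)) by ring,
          inv_mul_cancel₀ hn0, one_mul]

lemma gpow_card_sub_one (g : G) : g ^ (Fintype.card G - 1) = g⁻¹ := by
  have h : g ^ (Fintype.card G - 1) * g = 1 := by
    rw [← pow_succ, Nat.sub_add_cancel (Nat.one_le_iff_ne_zero.2 Fintype.card_ne_zero),
      pow_card_eq_one]
  exact eq_inv_of_mul_eq_one_left h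

lemma Nfix_inv_eq (g h : G) :
    Nfix g⁻¹ h = (univ.filter fun x => x⁻¹ * g * x = h).card := by
  unfold Nfix
  congr 1
  ext x
  simp only [mem_filter, mem_univ, true_and]
  constructor
  · intro e
    have e1 : x * h = g * x := by
      have h2 := congrArg (fun z => g * z) e
      simpa [mul_assoc] using h2
    have h3 := congrArg (fun z => x⁻¹ * z) e1
    simpa [mul_assoc] using h3.symm
  · intro e
    rw [← e]
    group

lemma sum_Nfix_inv (g : G) (H : Subgroup G) :
    ∑ h : ↥H, (Nfix g⁻¹ ↑h : ℂ)
      = ((univ.filter fun x : G => x⁻¹ * g * x ∈ H).card : ℂ) := by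
  have key : ∑ h : ↥H, Nfix g⁻¹ ↑h
      = (univ.filter fun x : G => x⁻¹ * g * x ∈ H).card := by
    calc ∑ h : ↥H, Nfix g⁻¹ ↑h
        = ∑ h : ↥H, (univ.filter fun x => x⁻¹ * g * x = ↑h).card :=
          Finset.sum_congr rfl fun h _ => Nfix_inv_eq g ↑h
      _ = ∑ h : ↥H, ∑ x : G, if x⁻¹ * g * x = ↑h then 1 else 0 :=
          Finset.sum_congr rfl fun h _ => Finset.card_filter _ _
      _ = ∑ x : G, ∑ h : ↥H, if x⁻¹ * g * x = ↑h then 1 else 0 := Finset.sum_comm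
      _ = ∑ x : G, if x⁻¹ * g * x ∈ H then 1 else 0 := by
          refine Finset.sum_congr rfl fun x _ => ?_
          by_cases hm : x⁻¹ * g * x ∈ H
          · rw [if_pos hm, Finset.sum_eq_single_of_mem (⟨x⁻¹ * g * x, hm⟩ : ↥H) (mem_univ _)]
            · rw [if_pos rfl]
            · intro b _ hbne
              rw [if_neg]
              intro he
              exact hbne (Subtype.ext he.symm)
          · rw [if_neg hm, Finset.sum_eq_zero]
            intro b _
            rw [if_neg]
            intro he
            rw [he] at hm
            exact hm b.2
      _ = (univ.filter fun x : G => x⁻¹ * g * x ∈ H).card := (Finset.card_filter _ _).symm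
  rw [← key]
  push_cast
  rfl

lemma fiber_card_eq (g h : G) (hconj : IsConj g h) :
    (univ.filter fun x => x⁻¹ * g * x = h).card
      = (univ.filter fun x => x⁻¹ * g * x = g).card := by
  rw [isConj_iff] at hconj
  obtain ⟨c, hc⟩ := hconj
  have hg : c⁻¹ * h * c = g := by rw [← hc]; group
  refine Finset.card_bij' (fun x _ => x * c) (fun y _ => y * c⁻¹) ?_ ?_ ?_ ?_
  · intro x hx
    simp only [Finset.mem_filter, Finset.mem_univ, true_and] at hx ⊢
    calc (x * c)⁻¹ * g * (x * c) = c⁻¹ * (x⁻¹ * g * x) * c := by group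
      _ = c⁻¹ * h * c := by rw [hx]
      _ = g := hg
  · intro y hy
    simp only [Finset.mem_filter, Finset.mem_univ, true_and] at hy ⊢
    calc (y * c⁻¹)⁻¹ * g * (y * c⁻¹) = c * (y⁻¹ * g * y) * c⁻¹ := by group
      _ = c * g * c⁻¹ := by rw [hy]
      _ = h := hc
  · intro x _
    group
  · intro y _
    group

lemma card_conj_filter (g : G) (H : Subgroup G) :
    (univ.filter fun x : G => x⁻¹ * g * x ∈ H).card
      = (univ.filter fun x : G => x⁻¹ * g * x = g).card * cnt H g := by
  have hmap : ∀ x ∈ univ.filter fun x : G => x⁻¹ * g * x ∈ H,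
      (x⁻¹ * g * x) ∈ univ.filter fun h => h ∈ H ∧ IsConj g h := by
    intro x hx
    simp only [Finset.mem_filter, Finset.mem_univ, true_and] at hx ⊢
    refine ⟨hx, isConj_iff.2 ⟨x⁻¹, by group⟩⟩
  rw [Finset.card_eq_sum_card_fiberwise hmap]
  have fib : ∀ h ∈ univ.filter fun h => h ∈ H ∧ IsConj g h,
      ((univ.filter fun x : G => x⁻¹ * g * x ∈ H).filter fun x => x⁻¹ * g * x = h).card
        = (univ.filter fun x : G => x⁻¹ * g * x = g).card := by
    intro h hh
    simp only [Finset.mem_filter, Finset.mem_univ, true_and] at hh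
    rw [Finset.filter_filter]
    have : (univ.filter fun x : G => x⁻¹ * g * x ∈ H ∧ x⁻¹ * g * x = h)
        = univ.filter fun x : G => x⁻¹ * g * x = h := by
      ext x
      simp only [mem_filter, mem_univ, true_and, and_iff_right_iff_imp]
      intro he
      rw [he]
      exact hh.1
    rw [this, fiber_card_eq g h hh.2]
  rw [Finset.sum_congr rfl fib, Finset.sum_const, cnt, smul_eq_mul, mul_comm]

lemma backward (H₁ H₂ : Subgroup G)
    (hdim : ∀ (V : Type) [AddCommGroup V] [Module ℂ V] [FiniteDimensional ℂ V]
      (ρ : Representation ℂ G V),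
      finrank ℂ (Representation.invariants (ρ.comp H₁.subtype : Representation ℂ ↥H₁ V))
        = finrank ℂ (Representation.invariants (ρ.comp H₂.subtype : Representation ℂ ↥H₂ V)))
    (g : G) : cnt H₁ g = cnt H₂ g := by
  -- step 1 : the two subgroups have the same cardinality
  have hcard : (Fintype.card ↥H₁ : ℂ) = (Fintype.card ↥H₂ : ℂ) := by
    have hreg := hdim (G → ℂ) rreg
    have e : ∀ H : Subgroup G,
        (finrank ℂ (Representation.invariants
          (rreg.comp H.subtype : Representation ℂ ↥H (G → ℂ))) : ℂ)
          = (Fintype.card ↥H : ℂ)⁻¹ * (Fintype.card G : ℂ) := by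
      intro H
      rw [finrank_invariants_eq]
      congr 1
      have e2 : ∀ h : ↥H, trace ℂ (G → ℂ)
          ((rreg.comp H.subtype : Representation ℂ ↥H (G → ℂ)) h)
          = if h = (1 : ↥H) then (Fintype.card G : ℂ) else 0 := by
        intro h
        have : trace ℂ (G → ℂ) (rreg (h : G))
            = ((univ.filter fun x : G => x * (h : G) = x).card : ℂ) :=
          trace_funLeft _
        rw [show ((rreg.comp H.subtype : Representation ℂ ↥H (G → ℂ)) h) = rreg (h : G)
          from rfl, this]
        by_cases h1 : h = (1 : ↥H)
        · rw [if_pos h1, h1]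
          have hful : (univ.filter fun x : G => x * ((1 : ↥H) : G) = x) = univ := by
            apply Finset.filter_true_of_mem
            intro x _
            simp
          rw [hful, Finset.card_univ]
        · rw [if_neg h1]
          have hemp : (univ.filter fun x : G => x * (h : G) = x) = ∅ := by
            apply Finset.filter_false_of_mem
            intro x _ he
            exact h1 (Subtype.ext (mul_eq_left.1 he))
          rw [hemp, Finset.card_empty, Nat.cast_zero]
      rw [Finset.sum_congr rfl fun h _ => e2 h, Finset.sum_ite_eq' univ (1 : ↥H)]
      rw [if_pos (mem_univ _)]
    have ecast : ((finrank ℂ (Representation.invariants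
          (rreg.comp H₁.subtype : Representation ℂ ↥H₁ (G → ℂ)))) : ℂ)
        = ((finrank ℂ (Representation.invariants
          (rreg.comp H₂.subtype : Representation ℂ ↥H₂ (G → ℂ)))) : ℂ) := by
      exact_mod_cast congrArg (Nat.cast (R := ℂ)) hreg
    rw [e H₁, e H₂] at ecast
    have hn0 : (Fintype.card G : ℂ) ≠ 0 := Nat.cast_ne_zero.2 Fintype.card_ne_zero
    exact inv_inj.1 (mul_right_cancel₀ hn0 ecast)
  -- step 2 : equality of the ranks of the twisted projections
  have hr : ∀ q : ℕ, rk g q H₁ = rk g q H₂ := by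
    intro q
    have h := hdim ↥(range (P g q)) (Wrep g q)
    rwa [finrank_Wrep_invariants, finrank_Wrep_invariants] at h
  -- step 3 : extract the coefficient via Fourier inversion
  have hsum : (Fintype.card ↥H₁ : ℂ)⁻¹ *
        ∑ h : ↥H₁, (Nfix (g ^ (Fintype.card G - 1)) ↑h : ℂ)
      = (Fintype.card ↥H₂ : ℂ)⁻¹ *
        ∑ h : ↥H₂, (Nfix (g ^ (Fintype.card G - 1)) ↑h : ℂ) := by
    rw [← sum_zeta_rk g H₁, ← sum_zeta_rk g H₂]
    exact Finset.sum_congr rfl fun q _ => by rw [hr q]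
  rw [hcard] at hsum
  have hm0 : (Fintype.card ↥H₂ : ℂ)⁻¹ ≠ 0 :=
    inv_ne_zero (Nat.cast_ne_zero.2 Fintype.card_ne_zero)
  have hsum2 := mul_left_cancel₀ hm0 hsum
  rw [gpow_card_sub_one g, sum_Nfix_inv g H₁, sum_Nfix_inv g H₂] at hsum2
  have hcards : (univ.filter fun x : G => x⁻¹ * g * x ∈ H₁).card
      = (univ.filter fun x : G => x⁻¹ * g * x ∈ H₂).card := by exact_mod_cast hsum2
  rw [card_conj_filter g H₁, card_conj_filter g H₂] at hcards
  have hZ : 0 < (univ.filter fun x : G => x⁻¹ * g * x = g).card :=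
    Finset.card_pos.2 ⟨1, by simp⟩
  exact Nat.eq_of_mul_eq_mul_left hZ hcards

end bwd2
end Gassmann

/-- For a finite group `G` with subgroups `H₁` and `H₂`, every conjugacy class
of `G` intersects `H₁` and `H₂` in the same number of elements if and only if for every
finite-dimensional complex representation `V` of `G`, the dimensions of the invariant
subspaces `V^{H₁}` and `V^{H₂}` are equal. -/
theorem gassmann_iff_invariant_dims_eq (G : Type) [Group G] [Fintype G]
    (H₁ H₂ : Subgroup G) :
    (∀ g : G, Nat.card {h : G // h ∈ H₁ ∧ IsConj g h}
            = Nat.card {h : G // h ∈ H₂ ∧ IsConj g h}) ↔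
    (∀ (V : Type) [AddCommGroup V] [Module ℂ V] [FiniteDimensional ℂ V]
        (ρ : Representation ℂ G V),
      Module.finrank ℂ (Representation.invariants (ρ.comp H₁.subtype : Representation ℂ H₁ V))
        = Module.finrank ℂ (Representation.invariants (ρ.comp H₂.subtype : Representation ℂ H₂ V))) := by
  haveI : Nonempty G := ⟨1⟩
  constructor
  · intro hc V _ _ _ ρ
    refine Gassmann.forward H₁ H₂ (fun g => ?_) V ρ
    have h := hc g
    rwa [Gassmann.natCard_eq_cnt, Gassmann.natCard_eq_cnt] at h
  · intro hdim g
    rw [Gassmann.natCard_eq_cnt, Gassmann.natCard_eq_cnt]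
    exact Gassmann.backward H₁ H₂ hdim g
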